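/- Let Q be a polynomial of degree k ≥ 1, m ≥ 2, b > 0. Partition the (2mk)-th roots of unity into N (those ω with |ω − 1| ≤ 2b/k) and F (the rest). Then there is an absolute constant C > 0 such that for all z on the unit circle with |z − 1| ≤ b/k: |Q(z)|^2 ≤ (m/(m−1)) max_{ω∈N} |Q(ω)|^2 + (C/(b(m−1))) max_{ω∈F} |Q(ω)|^2. -/

import Mathlib

open Finset Polynomial Complex Real

lemma aux_sum_inv_sq (J : ℕ) (hJ : 1 ≤ J) (M : ℕ) :
    ∑ t ∈ Finset.Ico J M, (1:ℝ)/(t:ℝ)^2 ≤ 2/J := by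
  have hJ' : (0:ℝ) < J := by exact_mod_cast hJ
  have hJ1 : (1:ℝ) ≤ J := by exact_mod_cast hJ
  have hsq : (1:ℝ)/(J:ℝ)^2 ≤ 1/J := by
    rw [div_le_div_iff₀ (by positivity) hJ']
    nlinarith [hJ1, hJ']
  have key : ∀ N : ℕ, ∑ t ∈ Finset.Ico (J+1) (J+1+N), (1:ℝ)/(t:ℝ)^2 ≤ 1/J - 1/(J+N) := by
    intro N
    induction N with
    | zero => simp
    | succ N ih =>
      have hne : J + 1 ≤ J + 1 + N := by omega
      rw [show J+1+(N+1) = (J+1+N)+1 by omega, Finset.sum_Ico_succ_top hne]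
      have h1 : (0:ℝ) < (J:ℝ) + N := by positivity
      have h2 : (0:ℝ) < (J:ℝ) + (N+1) := by positivity
      have hterm : (1:ℝ)/((J+1+N:ℕ):ℝ)^2 ≤ 1/((J:ℝ)+N) - 1/((J:ℝ)+(N+1)) := by
        push_cast
        rw [div_sub_div _ _ (ne_of_gt h1) (ne_of_gt h2)]
        rw [div_le_div_iff₀ (by positivity) (by positivity)]
        nlinarith [h1, h2]
      push_cast at *
      linarith
  rcases le_or_gt M (J+1) with h | h
  · have hsub : ∑ t ∈ Finset.Ico J M, (1:ℝ)/(t:ℝ)^2 ≤ ∑ t ∈ Finset.Ico J (J+1), (1:ℝ)/(t:ℝ)^2 := by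
      apply Finset.sum_le_sum_of_subset_of_nonneg (Finset.Ico_subset_Ico le_rfl h)
      intros; positivity
    have h1 : ∑ t ∈ Finset.Ico J (J+1), (1:ℝ)/(t:ℝ)^2 = 1/(J:ℝ)^2 := by simp
    rw [h1] at hsub
    calc ∑ t ∈ Finset.Ico J M, (1:ℝ)/(t:ℝ)^2 ≤ 1/(J:ℝ)^2 := hsub
      _ ≤ 1/(J:ℝ) := hsq
      _ ≤ 2/J := by rw [div_le_div_iff₀ hJ' hJ']; nlinarith [hJ1, hJ']
  · have hM : M = J + 1 + (M - J - 1) := by omega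
    rw [Finset.sum_eq_sum_Ico_succ_bot (by omega : J < M)]
    have hk := key (M - J - 1)
    rw [← hM] at hk
    have h1 : (0:ℝ) ≤ 1/((J:ℝ)+(M-J-1:ℕ)) := by positivity
    have htail : ∑ t ∈ Finset.Ico (J+1) M, (1:ℝ)/(t:ℝ)^2 ≤ 1/J := by linarith
    have : (1:ℝ)/((J:ℕ):ℝ)^2 + ∑ t ∈ Finset.Ico (J+1) M, (1:ℝ)/(t:ℝ)^2 ≤ 1/J + 1/J := by
      push_cast at *; linarith
    calc (1:ℝ)/((J:ℕ):ℝ)^2 + ∑ t ∈ Finset.Ico (J+1) M, (1:ℝ)/(t:ℝ)^2 ≤ 1/J + 1/J := this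
      _ = 2/J := by ring


lemma aux_chord_eq (θ : ℝ) (h0 : 0 ≤ θ) (hπ : θ ≤ π) :
    ‖Complex.exp ((θ:ℂ) * Complex.I) - 1‖ = 2 * Real.sin (θ/2) := by
  have hexp : Complex.exp ((θ:ℂ) * Complex.I)
      = ((Real.cos θ : ℝ) : ℂ) + ((Real.sin θ : ℝ) : ℂ) * Complex.I := by
    rw [Complex.exp_mul_I, Complex.ofReal_cos, Complex.ofReal_sin]
  have hns : Complex.normSq (Complex.exp ((θ:ℂ) * Complex.I) - 1)
      = (Real.cos θ - 1)^2 + (Real.sin θ)^2 := by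
    rw [hexp]
    simp [Complex.normSq_apply, Complex.cos_ofReal_re, Complex.sin_ofReal_re]
    ring
  have hcos : (Real.cos θ - 1)^2 + (Real.sin θ)^2 = (2 * Real.sin (θ/2))^2 := by
    have h1 : Real.sin (θ/2)^2 = 1/2 - Real.cos (2*(θ/2))/2 := Real.sin_sq_eq_half_sub (θ/2)
    have h2 : Real.sin θ ^2 + Real.cos θ ^2 = 1 := Real.sin_sq_add_cos_sq θ
    have h3 : (2:ℝ)*(θ/2) = θ := by ring
    rw [h3] at h1
    nlinarith [h1, h2]
  have hsin : 0 ≤ Real.sin (θ/2) :=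
    Real.sin_nonneg_of_nonneg_of_le_pi (by linarith) (by linarith [Real.pi_pos])
  rw [Complex.norm_def, hns, hcos, Real.sqrt_sq (by linarith)]

lemma aux_chord_lower (θ : ℝ) (h0 : 0 ≤ θ) (hπ : θ ≤ π) :
    2/π * θ ≤ ‖Complex.exp ((θ:ℂ) * Complex.I) - 1‖ := by
  rw [aux_chord_eq θ h0 hπ]
  have := Real.mul_le_sin (x := θ/2) (by linarith) (by linarith)
  linarith

lemma aux_chord_upper (θ : ℝ) (h0 : 0 ≤ θ) (hπ : θ ≤ π) :
    ‖Complex.exp ((θ:ℂ) * Complex.I) - 1‖ ≤ θ := by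
  rw [aux_chord_eq θ h0 hπ]
  have h := Real.sin_le (by linarith : 0 ≤ θ/2)
  linarith


lemma aux_parseval {n : ℕ} (hn : 0 < n) {ζ : ℂ} (hζ : IsPrimitiveRoot ζ n)
    (P : Polynomial ℂ) (hP : P.natDegree < n) :
    ∑ j ∈ Finset.range n, Complex.normSq (P.eval (ζ^j))
      = n * ∑ r ∈ Finset.range n, Complex.normSq (P.coeff r) := by
  have hζn : ζ ^ n = 1 := hζ.pow_eq_one
  have habs1 : ‖ζ‖ = 1 := hζ.norm'_eq_one hn.ne'
  have hmulconj : ζ * (starRingEnd ℂ) ζ = 1 := by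
    rw [Complex.mul_conj, Complex.normSq_eq_norm_sq]
    rw [habs1]; norm_num
  set c : ℕ → ℂ := fun r => P.coeff r with hc
  -- orthogonality
  have key : ∀ r ∈ Finset.range n, ∀ s ∈ Finset.range n,
      (∑ j ∈ Finset.range n, (ζ^r * ((starRingEnd ℂ) ζ)^s)^j) = if r = s then (n:ℂ) else 0 := by
    intro r hr s hs
    rcases eq_or_ne r s with rfl | hrs
    · simp only [if_pos rfl]
      have : ζ^r * ((starRingEnd ℂ) ζ)^r = 1 := by
        rw [← mul_pow, hmulconj, one_pow]
      rw [this]; simp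
    · rw [if_neg hrs]
      set w := ζ^r * ((starRingEnd ℂ) ζ)^s with hw
      have hwn : w ^ n = 1 := by
        rw [hw, mul_pow, ← pow_mul, ← pow_mul, mul_comm r n, mul_comm s n, pow_mul, pow_mul,
          hζn, ← map_pow, hζn]
        simp
      have hw1 : w ≠ 1 := by
        intro h
        have hinv : (starRingEnd ℂ) ζ = ζ⁻¹ := by
          rw [← Complex.inv_eq_conj]
          exact habs1
        rw [hw, hinv, inv_pow] at h
        have hζ0 : ζ ≠ 0 := fun h0 => by simp [h0] at habs1
        have : ζ^r = ζ^s := by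
          field_simp at h
          exact h
        exact hrs (hζ.pow_inj (Finset.mem_range.1 hr) (Finset.mem_range.1 hs) this)
      rw [geom_sum_eq hw1, hwn]
      simp
  -- main computation in ℂ
  have main : ∑ j ∈ Finset.range n, (P.eval (ζ^j) * (starRingEnd ℂ) (P.eval (ζ^j)))
      = (n:ℂ) * ∑ r ∈ Finset.range n, (c r * (starRingEnd ℂ) (c r)) := by
    have hev : ∀ j, P.eval (ζ^j) = ∑ r ∈ Finset.range n, c r * (ζ^r)^j := by
      intro j
      rw [Polynomial.eval_eq_sum_range' hP]
      refine Finset.sum_congr rfl fun r _ => ?_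
      rw [← pow_mul, ← pow_mul, mul_comm r j]
    calc ∑ j ∈ Finset.range n, (P.eval (ζ^j) * (starRingEnd ℂ) (P.eval (ζ^j)))
        = ∑ j ∈ Finset.range n, ∑ r ∈ Finset.range n, ∑ s ∈ Finset.range n,
            (c r * (starRingEnd ℂ) (c s)) * (ζ^r * ((starRingEnd ℂ) ζ)^s)^j := by
          refine Finset.sum_congr rfl fun j _ => ?_
          rw [hev j, map_sum, Finset.sum_mul_sum]
          refine Finset.sum_congr rfl fun r _ => Finset.sum_congr rfl fun s _ => ?_
          rw [map_mul]
          simp only [mul_pow, map_pow, ← pow_mul]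
          ring
      _ = ∑ r ∈ Finset.range n, ∑ s ∈ Finset.range n,
            (c r * (starRingEnd ℂ) (c s)) * ∑ j ∈ Finset.range n, (ζ^r * ((starRingEnd ℂ) ζ)^s)^j := by
          rw [Finset.sum_comm]
          refine Finset.sum_congr rfl fun r _ => ?_
          rw [Finset.sum_comm]
          refine Finset.sum_congr rfl fun s _ => ?_
          rw [Finset.mul_sum]
      _ = ∑ r ∈ Finset.range n, ∑ s ∈ Finset.range n,
            (c r * (starRingEnd ℂ) (c s)) * (if r = s then (n:ℂ) else 0) := by
          refine Finset.sum_congr rfl fun r hr => Finset.sum_congr rfl fun s hs => ?_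
          rw [key r hr s hs]
      _ = (n:ℂ) * ∑ r ∈ Finset.range n, (c r * (starRingEnd ℂ) (c r)) := by
          rw [Finset.mul_sum]
          refine Finset.sum_congr rfl fun r hr => ?_
          simp only [mul_ite, mul_zero]
          rw [Finset.sum_ite_eq]
          rw [if_pos hr]
          ring
  -- convert to real
  have : ((∑ j ∈ Finset.range n, Complex.normSq (P.eval (ζ^j)) : ℝ) : ℂ)
      = (((n : ℝ) * ∑ r ∈ Finset.range n, Complex.normSq (P.coeff r) : ℝ) : ℂ) := by
    push_cast
    simpa [Complex.mul_conj] using main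
  exact_mod_cast this


lemma aux_normSq_le_of_add (v a : ℂ) :
    Complex.normSq v ≤ 2 * Complex.normSq a + 2 * Complex.normSq (v - a) := by
  have h : v = a + (v - a) := by ring
  rw [h]
  simp only [Complex.normSq_apply, Complex.add_re, Complex.add_im, Complex.sub_re,
    Complex.sub_im]
  nlinarith [sq_nonneg (a.re - (v.re - a.re)), sq_nonneg (a.im - (v.im - a.im))]

set_option maxHeartbeats 3200000 in
/-- Near/far interpolation bound for polynomials: there is an absolute constant `C > 0` such that
for any polynomial `Q` of degree `k ≥ 1`, any `m ≥ 2` and `b > 0`, splitting the `2mk`-th roots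
of unity into those with `|ω-1| ≤ 2b/k` (near) and the rest (far), every `z` on the unit circle
with `|z-1| ≤ b/k` satisfies
`|Q(z)|² ≤ (m/(m-1)) maxₙ |Q(ω)|² + (C/(b(m-1))) max_f |Q(ω)|²`. -/
theorem interpolation_near_far :
    ∃ C : ℝ, 0 < C ∧
      ∀ (k m : ℕ) (b : ℝ), 1 ≤ k → 2 ≤ m → 0 < b →
      ∀ Q : Polynomial ℂ, Q.natDegree ≤ k →
      ∀ z : ℂ, ‖z‖ = 1 → ‖z - 1‖ ≤ b / k →
      ‖Q.eval z‖ ^ 2 ≤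
        ((m : ℝ) / ((m : ℝ) - 1)) *
          sSup {y : ℝ | ∃ ω : ℂ, ω ^ (2 * m * k) = 1 ∧ ‖ω - 1‖ ≤ 2 * b / k ∧
            y = ‖Q.eval ω‖ ^ 2}
        + (C / (b * ((m : ℝ) - 1))) *
          sSup {y : ℝ | ∃ ω : ℂ, ω ^ (2 * m * k) = 1 ∧ 2 * b / k < ‖ω - 1‖ ∧
            y = ‖Q.eval ω‖ ^ 2} := by
  classical
  refine ⟨101, by norm_num, ?_⟩
  intro k m b hk hm hb Q hQ z hz hzb
  -- basic numerics
  set n : ℕ := 2 * m * k with hn_def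
  have hn : 0 < n := by positivity
  set q : ℕ := (m - 1) * k with hq_def
  have hq1 : 1 ≤ q := by
    have : 1 ≤ m - 1 := by omega
    calc 1 = 1 * 1 := by ring
    _ ≤ (m-1) * k := Nat.mul_le_mul this hk
  have hqk : k ≤ q := by
    calc k = 1 * k := (one_mul k).symm
    _ ≤ (m-1)*k := Nat.mul_le_mul_right k (by omega)
  have hqkn : q + k ≤ n := by
    have h1 : q + k = m * k := by
      have hm1 : 1 ≤ m := by omega
      calc q + k = ((m-1)+1)*k := by rw [hq_def]; ring
      _ = m * k := by rw [Nat.sub_add_cancel hm1]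
    have h2 : m * k ≤ 2 * m * k := by
      have : m ≤ 2 * m := by omega
      calc m * k ≤ (2*m) * k := Nat.mul_le_mul_right k this
      _ = 2*m*k := by ring
    rw [h1]; exact h2
  have hkR : (1:ℝ) ≤ (k:ℝ) := by exact_mod_cast hk
  have hmR : (2:ℝ) ≤ (m:ℝ) := by exact_mod_cast hm
  have hqR : ((q:ℕ):ℝ) = ((m:ℝ) - 1) * (k:ℝ) := by
    rw [hq_def]
    push_cast [Nat.cast_sub (by omega : 1 ≤ m)]
    ring
  have hnR : ((n:ℕ):ℝ) = 2 * (m:ℝ) * (k:ℝ) := by rw [hn_def]; push_cast; ring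
  set d : ℝ := b / k with hd_def
  have hd : 0 < d := by positivity
  -- the root of unity
  set ζ : ℂ := Complex.exp (2 * (π:ℂ) * Complex.I / n) with hζ_def
  have hζprim : IsPrimitiveRoot ζ n := Complex.isPrimitiveRoot_exp n hn.ne'
  have hζn : ζ ^ n = 1 := hζprim.pow_eq_one
  have hζabs : ‖ζ‖ = 1 := by
    exact hζprim.norm'_eq_one hn.ne'
  have hωn : ∀ j : ℕ, (ζ^j) ^ (2*m*k) = 1 := by
    intro j
    rw [← pow_mul, mul_comm j (2*m*k), pow_mul]
    rw [show 2*m*k = n from rfl, hζn, one_pow]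
  have hωabs : ∀ j : ℕ, ‖ζ^j‖ = 1 := by
    intro j; rw [norm_pow, hζabs, one_pow]
  -- conj z facts
  set cz : ℂ := (starRingEnd ℂ) z with hcz_def
  have hzcz : z * cz = 1 := by
    rw [hcz_def, Complex.mul_conj]
    rw [← Complex.sq_norm, hz]
    norm_num
  have hczabs : ‖cz‖ = 1 := by rw [hcz_def, Complex.norm_conj, hz]
  -- the bump polynomial D
  set D : Polynomial ℂ := ∑ i ∈ Finset.range q, Polynomial.C (cz^i) * Polynomial.X^i with hD_def
  have hDcoeff : ∀ r : ℕ, D.coeff r = if r < q then cz^r else 0 := by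
    intro r
    rw [hD_def, Polynomial.finset_sum_coeff]
    simp only [Polynomial.coeff_C_mul, Polynomial.coeff_X_pow, mul_ite, mul_one, mul_zero]
    rw [Finset.sum_ite_eq (Finset.range q) r]
    simp [Finset.mem_range]
  have hDdeg : D.natDegree ≤ q - 1 := by
    rw [Polynomial.natDegree_le_iff_coeff_eq_zero]
    intro r hr
    rw [hDcoeff r, if_neg (by omega)]
  have hDeval : ∀ w : ℂ, D.eval w = ∑ i ∈ Finset.range q, (cz * w)^i := by
    intro w
    rw [hD_def, Polynomial.eval_finset_sum]
    refine Finset.sum_congr rfl fun i _ => ?_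
    simp [mul_pow]
  -- |D(ω)| ≤ 2 / |ω - z|
  have hDbound : ∀ w : ℂ, ‖w‖ = 1 →
      ‖D.eval w‖ * ‖w - z‖ ≤ 2 := by
    intro w hw
    have hgeom : (D.eval w) * (cz * w - 1) = (cz*w)^q - 1 := by
      rw [hDeval w]; exact geom_sum_mul (cz*w) q
    have h1 : cz * w - 1 = cz * (w - z) := by
      rw [mul_sub, mul_comm cz z, hzcz]
    have h2 : ‖cz * w - 1‖ = ‖w - z‖ := by
      rw [h1, norm_mul, hczabs, one_mul]
    have h3 : ‖(cz*w)^q - 1‖ ≤ 2 := by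
      calc ‖(cz*w)^q - 1‖ ≤ ‖(cz*w)^q‖ + ‖(1:ℂ)‖ := by
            have := norm_sub_le ((cz*w)^q) (1:ℂ)
            simpa using this
      _ = 2 := by rw [norm_pow, norm_mul, hczabs, hw]; norm_num
    calc ‖D.eval w‖ * ‖w - z‖
        = ‖D.eval w * (cz * w - 1)‖ := by rw [norm_mul, h2]
      _ = ‖(cz*w)^q - 1‖ := by rw [hgeom]
      _ ≤ 2 := h3
  -- P = Q * D and its coefficients
  set P : Polynomial ℂ := Q * D with hP_def
  have hPdeg : P.natDegree < n := by
    have h1 : P.natDegree ≤ Q.natDegree + D.natDegree := Polynomial.natDegree_mul_le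
    omega
  -- coefficients of P
  set v : ℂ := Q.eval z with hv_def
  set pr : ℕ → ℂ := fun j => ∑ i ∈ Finset.range (j+1), Q.coeff i * z^i with hpr_def
  have hvsum : ∀ N : ℕ, k ≤ N → ∑ i ∈ Finset.range (N+1), Q.coeff i * z^i = v := by
    intro N hN
    rw [hv_def, Polynomial.eval_eq_sum_range' (by omega : Q.natDegree < N+1)]
  set A : ℕ → ℂ := fun r => ∑ i ∈ (Finset.range (r+1)).filter (fun i => r < i + q),
      Q.coeff i * z^i with hA_def
  have hPcoeff : ∀ r : ℕ, P.coeff r = cz^r * A r := by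
    intro r
    rw [hP_def, Polynomial.coeff_mul, Finset.Nat.sum_antidiagonal_eq_sum_range_succ_mk]
    have hrhs : cz^r * A r
        = ∑ i ∈ Finset.range (r+1), (if r < i + q then cz^r * (Q.coeff i * z^i) else 0) := by
      rw [hA_def]
      simp only []
      rw [Finset.mul_sum, Finset.sum_filter]
    rw [hrhs]
    refine Finset.sum_congr rfl fun i hi => ?_
    rw [Finset.mem_range] at hi
    have hir : i ≤ r := by omega
    rw [hDcoeff (r - i)]
    by_cases hc : r < i + q
    · rw [if_pos (by omega : r - i < q), if_pos hc]
      have hsplit : cz ^ r = cz^(r-i) * cz^i := by rw [← pow_add]; congr 1; omega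
      have hone : (z*cz)^i = 1 := by rw [hzcz, one_pow]
      calc Q.coeff i * cz^(r-i) = Q.coeff i * cz^(r-i) * ((z*cz)^i) := by rw [hone]; ring
        _ = cz^r * (Q.coeff i * z^i) := by rw [hsplit, mul_pow]; ring
    · rw [if_neg (by omega : ¬ (r - i < q)), if_neg hc, mul_zero]
  have hPnormSq : ∀ r : ℕ, Complex.normSq (P.coeff r) = Complex.normSq (A r) := by
    intro r
    rw [hPcoeff r, Complex.normSq_mul]
    have : Complex.normSq (cz^r) = 1 := by
      rw [← Complex.sq_norm, norm_pow, hczabs]; norm_num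
    rw [this, one_mul]
  -- window evaluations
  have hAmid : ∀ r, k ≤ r → r < q → A r = v := by
    intro r h1 h2
    rw [hA_def]
    simp only []
    rw [Finset.filter_true_of_mem (fun i _ => by omega)]
    exact hvsum r h1
  have hApre : ∀ r, r < k → A r = pr r := by
    intro r h1
    rw [hA_def, hpr_def]
    simp only []
    rw [Finset.filter_true_of_mem (fun i _ => by omega)]
  have hAsuf : ∀ j, j < k → A (q+j) = v - pr j := by
    intro j h1
    have htot := Finset.sum_filter_add_sum_filter_not (Finset.range (q+j+1))
      (fun i => q + j < i + q) (fun i => Q.coeff i * z^i)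
    have h2 : (Finset.range (q+j+1)).filter (fun i => ¬ (q + j < i + q))
        = Finset.range (j+1) := by
      ext i
      simp only [Finset.mem_filter, Finset.mem_range]
      omega
    rw [h2] at htot
    rw [hvsum (q+j) (by omega)] at htot
    have h3 : A (q+j) = ∑ i ∈ (Finset.range (q+j+1)).filter (fun i => q + j < i + q),
        Q.coeff i * z^i := by rw [hA_def]
    rw [h3, hpr_def]
    simp only []
    linear_combination htot
  -- the window inequality
  have hwindow : ((q:ℝ) - (k:ℝ)/2) * Complex.normSq v
      ≤ ∑ r ∈ Finset.range n, Complex.normSq (P.coeff r) := by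
    have hnonneg : ∀ r ∈ Finset.range n, 0 ≤ Complex.normSq (P.coeff r) :=
      fun r _ => Complex.normSq_nonneg _
    have hsub : ∑ r ∈ Finset.range (q+k), Complex.normSq (P.coeff r)
        ≤ ∑ r ∈ Finset.range n, Complex.normSq (P.coeff r) := by
      apply Finset.sum_le_sum_of_subset_of_nonneg
      · exact Finset.range_subset_range.2 hqkn
      · intro r _ _; exact Complex.normSq_nonneg _
    have hsplit1 : ∑ r ∈ Finset.Ico 0 q, Complex.normSq (P.coeff r)
        + ∑ r ∈ Finset.Ico q (q+k), Complex.normSq (P.coeff r)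
        = ∑ r ∈ Finset.Ico 0 (q+k), Complex.normSq (P.coeff r) :=
      Finset.sum_Ico_consecutive _ (Nat.zero_le q) (Nat.le_add_right q k)
    have hsplit2 : ∑ r ∈ Finset.Ico 0 k, Complex.normSq (P.coeff r)
        + ∑ r ∈ Finset.Ico k q, Complex.normSq (P.coeff r)
        = ∑ r ∈ Finset.Ico 0 q, Complex.normSq (P.coeff r) :=
      Finset.sum_Ico_consecutive _ (Nat.zero_le k) hqk
    have hmid : ∑ r ∈ Finset.Ico k q, Complex.normSq (P.coeff r)
        = ((q:ℝ) - (k:ℝ)) * Complex.normSq v := by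
      have : ∀ r ∈ Finset.Ico k q, Complex.normSq (P.coeff r) = Complex.normSq v := by
        intro r hr
        rw [Finset.mem_Ico] at hr
        rw [hPnormSq r, hAmid r hr.1 hr.2]
      rw [Finset.sum_congr rfl this, Finset.sum_const, Nat.card_Ico, nsmul_eq_mul]
      congr 1
      rw [Nat.cast_sub hqk]
    have hpre : ∑ r ∈ Finset.Ico 0 k, Complex.normSq (P.coeff r)
        = ∑ j ∈ Finset.range k, Complex.normSq (pr j) := by
      rw [← Finset.range_eq_Ico]
      refine Finset.sum_congr rfl fun r hr => ?_
      rw [Finset.mem_range] at hr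
      rw [hPnormSq r, hApre r hr]
    have hsuf : ∑ r ∈ Finset.Ico q (q+k), Complex.normSq (P.coeff r)
        = ∑ j ∈ Finset.range k, Complex.normSq (v - pr j) := by
      rw [Finset.sum_Ico_eq_sum_range]
      simp only [Nat.add_sub_cancel_left]
      refine Finset.sum_congr rfl fun j hj => ?_
      rw [Finset.mem_range] at hj
      rw [hPnormSq (q+j), hAsuf j hj]
    have hpair : (k:ℝ) * (Complex.normSq v / 2)
        ≤ ∑ j ∈ Finset.range k, Complex.normSq (pr j)
          + ∑ j ∈ Finset.range k, Complex.normSq (v - pr j) := by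
      rw [← Finset.sum_add_distrib]
      calc (k:ℝ) * (Complex.normSq v / 2)
          = ∑ _j ∈ Finset.range k, (Complex.normSq v / 2) := by
            rw [Finset.sum_const, Finset.card_range, nsmul_eq_mul]
        _ ≤ ∑ j ∈ Finset.range k, (Complex.normSq (pr j) + Complex.normSq (v - pr j)) := by
            refine Finset.sum_le_sum fun j _ => ?_
            have := aux_normSq_le_of_add v (pr j)
            linarith
    have hQv : (0:ℝ) ≤ Complex.normSq v := Complex.normSq_nonneg v
    have hIco : ∑ r ∈ Finset.Ico 0 (q+k), Complex.normSq (P.coeff r)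
        = ∑ r ∈ Finset.range (q+k), Complex.normSq (P.coeff r) := by
      rw [Finset.range_eq_Ico]
    linarith [hsub, hsplit1, hsplit2, hmid, hpre, hsuf, hpair, hIco]
  -- Parseval for P and D
  have hpars := aux_parseval hn hζprim P hPdeg
  have hDdegn : D.natDegree < n := by omega
  have hDtotal : ∑ j ∈ Finset.range n, Complex.normSq (D.eval (ζ^j)) = (n:ℝ) * q := by
    rw [aux_parseval hn hζprim D hDdegn]
    congr 1
    have h1 : ∀ r ∈ Finset.range n, Complex.normSq (D.coeff r)
        = if r < q then (1:ℝ) else 0 := by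
      intro r _
      rw [hDcoeff r]
      split
      · rw [← Complex.sq_norm, norm_pow, hczabs]; norm_num
      · simp
    rw [Finset.sum_congr rfl h1, Finset.sum_ite, Finset.sum_const, Finset.sum_const]
    have h2 : (Finset.range n).filter (fun r => r < q) = Finset.range q := by
      ext r
      simp only [Finset.mem_filter, Finset.mem_range]
      omega
    rw [h2]
    simp
  have hevalP : ∀ j : ℕ, Complex.normSq (P.eval (ζ^j))
      = Complex.normSq (Q.eval (ζ^j)) * Complex.normSq (D.eval (ζ^j)) := by
    intro j; rw [hP_def, Polynomial.eval_mul, Complex.normSq_mul]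
  -- near and far index sets
  set Nr : Finset ℕ := (Finset.range n).filter
      (fun j => ‖ζ^j - 1‖ ≤ 2*b/(k:ℝ)) with hNr_def
  set Fr : Finset ℕ := (Finset.range n).filter
      (fun j => ¬ (‖ζ^j - 1‖ ≤ 2*b/(k:ℝ))) with hFr_def
  have h2bk : 2*b/(k:ℝ) = 2*d := by rw [hd_def]; ring
  -- the sup sets
  have hroots_fin : {ω : ℂ | ω ^ n = 1}.Finite := by
    apply Set.Finite.subset (Polynomial.nthRoots n (1:ℂ)).toFinset.finite_toSet
    intro x hx
    rw [Set.mem_setOf_eq] at hx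
    simp only [Finset.mem_coe, Multiset.mem_toFinset]
    rw [Polynomial.mem_nthRoots hn]
    exact hx
  set NS : Set ℝ := {y : ℝ | ∃ ω : ℂ, ω ^ n = 1 ∧ ‖ω - 1‖ ≤ 2*b/(k:ℝ) ∧
      y = ‖Q.eval ω‖^2} with hNS_def
  set FS : Set ℝ := {y : ℝ | ∃ ω : ℂ, ω ^ n = 1 ∧ 2*b/(k:ℝ) < ‖ω - 1‖ ∧
      y = ‖Q.eval ω‖^2} with hFS_def
  have hNSsub : NS ⊆ (fun ω => ‖Q.eval ω‖^2) '' {ω : ℂ | ω ^ n = 1} := by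
    rintro y ⟨ω, h1, h2, h3⟩
    exact ⟨ω, h1, h3.symm⟩
  have hFSsub : FS ⊆ (fun ω => ‖Q.eval ω‖^2) '' {ω : ℂ | ω ^ n = 1} := by
    rintro y ⟨ω, h1, h2, h3⟩
    exact ⟨ω, h1, h3.symm⟩
  have hNSbdd : BddAbove NS := ((hroots_fin.image _).subset hNSsub).bddAbove
  have hFSbdd : BddAbove FS := ((hroots_fin.image _).subset hFSsub).bddAbove
  have hNS0 : 0 ≤ sSup NS := by
    have hmem : ‖Q.eval 1‖^2 ∈ NS := by
      refine ⟨1, one_pow n, ?_, rfl⟩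
      simp only [sub_self, norm_zero]
      positivity
    exact le_trans (by positivity) (le_csSup hNSbdd hmem)
  have hFS0 : 0 ≤ sSup FS := by
    rcases Set.eq_empty_or_nonempty FS with hFSe | ⟨y, hy⟩
    · rw [hFSe, Real.sSup_empty]
    · obtain ⟨ω, h1, h2, h3⟩ := hy
      have : (0:ℝ) ≤ y := by rw [h3]; positivity
      exact le_trans this (le_csSup hFSbdd ⟨ω, h1, h2, h3⟩)
  -- near sum
  have hnear_sum : ∑ j ∈ Nr, Complex.normSq (Q.eval (ζ^j)) * Complex.normSq (D.eval (ζ^j))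
      ≤ sSup NS * ((n:ℝ) * q) := by
    have h1 : ∑ j ∈ Nr, Complex.normSq (Q.eval (ζ^j)) * Complex.normSq (D.eval (ζ^j))
        ≤ ∑ j ∈ Nr, sSup NS * Complex.normSq (D.eval (ζ^j)) := by
      refine Finset.sum_le_sum fun j hj => ?_
      have hjN := (Finset.mem_filter.1 hj).2
      have hmem : ‖Q.eval (ζ^j)‖^2 ∈ NS := ⟨ζ^j, by
        rw [← pow_mul, mul_comm j n, pow_mul, hζn, one_pow], hjN, rfl⟩
      have h2 : Complex.normSq (Q.eval (ζ^j)) ≤ sSup NS := by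
        rw [← Complex.sq_norm]
        exact le_csSup hNSbdd hmem
      exact mul_le_mul_of_nonneg_right h2 (Complex.normSq_nonneg _)
    rw [← Finset.mul_sum] at h1
    have h3 : ∑ j ∈ Nr, Complex.normSq (D.eval (ζ^j))
        ≤ ∑ j ∈ Finset.range n, Complex.normSq (D.eval (ζ^j)) := by
      apply Finset.sum_le_sum_of_subset_of_nonneg (Finset.filter_subset _ _)
      intro i _ _
      exact Complex.normSq_nonneg _
    rw [hDtotal] at h3
    exact le_trans h1 (mul_le_mul_of_nonneg_left h3 hNS0)
  -- far estimate
  set J0 : ℕ := Nat.floor (d*n/π) + 1 with hJ0_def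
  have hJ0pos : 1 ≤ J0 := by omega
  have hJ0gt : d*(n:ℝ)/π < (J0:ℝ) := by
    rw [hJ0_def]
    push_cast
    exact Nat.lt_floor_add_one _
  have hfar_key : ∀ j ∈ Fr, (J0 ≤ min j (n - j)) ∧
      Complex.normSq (D.eval (ζ^j)) ≤ (n:ℝ)^2/((min j (n-j) : ℕ):ℝ)^2 := by
    intro j hj
    obtain ⟨hjr', hjc'⟩ := Finset.mem_filter.1 hj
    rw [Finset.mem_range] at hjr'
    push_neg at hjc'
    rw [h2bk] at hjc'
    have hj0 : j ≠ 0 := by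
      rintro rfl
      rw [pow_zero, sub_self, norm_zero] at hjc'
      linarith
    set t : ℕ := min j (n - j) with ht_def
    have ht1 : 1 ≤ t := by omega
    have h2t : 2*t ≤ n := by omega
    have htn : t ≤ n := by omega
    have habs_sym : ‖ζ^j - 1‖ = ‖ζ^t - 1‖ := by
      rcases le_or_gt j (n - j) with hcase | hcase
      · rw [ht_def, min_eq_left hcase]
      · have htj : t = n - j := by rw [ht_def]; omega
        have hmul : ζ^j * ζ^(n-j) = 1 := by
          rw [← pow_add, show j + (n-j) = n by omega, hζn]
        have hinv : ζ^(n-j) = (ζ^j)⁻¹ := eq_inv_of_mul_eq_one_right hmul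
        have hconj : (ζ^j)⁻¹ = (starRingEnd ℂ) (ζ^j) := Complex.inv_eq_conj (hωabs j)
        have hsub : (starRingEnd ℂ) (ζ^j) - 1 = (starRingEnd ℂ) (ζ^j - 1) := by
          rw [map_sub, map_one]
        rw [htj, hinv, hconj, hsub, Complex.norm_conj]
    have hζt : ζ^t = Complex.exp (((2*π*(t:ℝ)/(n:ℝ) : ℝ):ℂ) * Complex.I) := by
      rw [hζ_def, ← Complex.exp_nat_mul]
      congr 1
      have hne : ((n:ℕ):ℂ) ≠ 0 := Nat.cast_ne_zero.2 hn.ne'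
      push_cast
      field_simp
    set θ : ℝ := 2*π*(t:ℝ)/(n:ℝ) with hθ_def
    have hnposR : (0:ℝ) < n := by exact_mod_cast hn
    have htposR : (0:ℝ) < t := by exact_mod_cast ht1
    have hθ0 : 0 ≤ θ := by positivity
    have hθπ : θ ≤ π := by
      rw [hθ_def, div_le_iff₀ hnposR]
      have h2tR : 2*(t:ℝ) ≤ (n:ℝ) := by exact_mod_cast h2t
      calc 2*π*(t:ℝ) = π*(2*(t:ℝ)) := by ring
        _ ≤ π*(n:ℝ) := mul_le_mul_of_nonneg_left h2tR Real.pi_pos.le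
    have hup : ‖ζ^j - 1‖ ≤ θ := by
      rw [habs_sym, hζt]; exact aux_chord_upper θ hθ0 hθπ
    have hlow : 2/π*θ ≤ ‖ζ^j - 1‖ := by
      rw [habs_sym, hζt]; exact aux_chord_lower θ hθ0 hθπ
    have hlow' : 4*(t:ℝ)/(n:ℝ) ≤ ‖ζ^j - 1‖ := by
      have heq : 2/π*θ = 4*(t:ℝ)/(n:ℝ) := by
        rw [hθ_def]; field_simp [Real.pi_ne_zero]; ring
      linarith
    constructor
    · have hlt : d*(n:ℝ)/π < (t:ℝ) := by
        have h1 : 2*d < θ := lt_of_lt_of_le hjc' hup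
        rw [hθ_def] at h1
        rw [div_lt_iff₀ Real.pi_pos]
        have h1' : 2*d*(n:ℝ) < 2*π*(t:ℝ) := by
          have := (lt_div_iff₀ hnposR).1 h1
          linarith
        linarith
      have hfl : ((Nat.floor (d*(n:ℝ)/π) : ℕ):ℝ) ≤ d*(n:ℝ)/π :=
        Nat.floor_le (by positivity)
      have : ((Nat.floor (d*(n:ℝ)/π) : ℕ):ℝ) < (t:ℝ) := lt_of_le_of_lt hfl hlt
      have hflt : Nat.floor (d*(n:ℝ)/π) < t := by exact_mod_cast this
      omega
    · have hdist : 2*(t:ℝ)/(n:ℝ) ≤ ‖ζ^j - z‖ := by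
        have htri : ‖ζ^j - 1‖ ≤ ‖ζ^j - z‖ + ‖z - 1‖ := by
          have h1 : ζ^j - 1 = (ζ^j - z) + (z - 1) := by ring
          rw [h1]
          exact norm_add_le _ _
        have h44 : 4*(t:ℝ)/(n:ℝ) = 2*(2*(t:ℝ)/(n:ℝ)) := by ring
        linarith [hzb, hjc', hlow', htri]
      have hD2 : ‖D.eval (ζ^j)‖ * ‖ζ^j - z‖ ≤ 2 :=
        hDbound (ζ^j) (hωabs j)
      have htpos2 : (0:ℝ) < 2*(t:ℝ)/(n:ℝ) := by positivity
      have habsD : ‖D.eval (ζ^j)‖ ≤ (n:ℝ)/(t:ℝ) := by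
        have h4 : ‖D.eval (ζ^j)‖ * (2*(t:ℝ)/(n:ℝ)) ≤ 2 := by
          calc ‖D.eval (ζ^j)‖ * (2*(t:ℝ)/(n:ℝ))
              ≤ ‖D.eval (ζ^j)‖ * ‖ζ^j - z‖ :=
                mul_le_mul_of_nonneg_left hdist (norm_nonneg _)
            _ ≤ 2 := hD2
        have h5 : ‖D.eval (ζ^j)‖ ≤ 2/(2*(t:ℝ)/(n:ℝ)) := by
          rw [le_div_iff₀ htpos2]
          exact h4
        have h6 : 2/(2*(t:ℝ)/(n:ℝ)) = (n:ℝ)/(t:ℝ) := by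
          rw [div_div_eq_mul_div]
          rw [div_eq_div_iff (by positivity) (ne_of_gt htposR)]
          ring
        rwa [h6] at h5
      rw [← Complex.sq_norm, ← div_pow]
      exact pow_le_pow_left₀ (norm_nonneg _) habsD 2
  have hfar_est : ∑ j ∈ Fr, Complex.normSq (D.eval (ζ^j)) ≤ 4*π*(n:ℝ)/d := by
    have h1 : ∑ j ∈ Fr, Complex.normSq (D.eval (ζ^j))
        ≤ ∑ j ∈ Fr, (n:ℝ)^2/((min j (n-j) : ℕ):ℝ)^2 :=
      Finset.sum_le_sum fun j hj => (hfar_key j hj).2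
    have hFrsub : ∀ j ∈ Fr, j < n := fun j hj =>
      Finset.mem_range.1 (Finset.mem_filter.1 hj).1
    -- split into two halves
    have h2 : ∑ j ∈ Fr, (n:ℝ)^2/((min j (n-j) : ℕ):ℝ)^2
        ≤ 2 * ∑ u ∈ Finset.Ico J0 (n+1), (n:ℝ)^2/(u:ℝ)^2 := by
      have hsplitF := Finset.sum_filter_add_sum_filter_not Fr (fun j => 2*j ≤ n)
        (fun j => (n:ℝ)^2/((min j (n-j) : ℕ):ℝ)^2)
      have hpiece1 : ∑ j ∈ Fr.filter (fun j => 2*j ≤ n), (n:ℝ)^2/((min j (n-j) : ℕ):ℝ)^2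
          ≤ ∑ u ∈ Finset.Ico J0 (n+1), (n:ℝ)^2/(u:ℝ)^2 := by
        have hcongr : ∀ j ∈ Fr.filter (fun j => 2*j ≤ n),
            (n:ℝ)^2/((min j (n-j) : ℕ):ℝ)^2 = (n:ℝ)^2/(j:ℝ)^2 := by
          intro j hj
          obtain ⟨hjF, hj2⟩ := Finset.mem_filter.1 hj
          congr 2
          · norm_cast
            omega
        rw [Finset.sum_congr rfl hcongr]
        apply Finset.sum_le_sum_of_subset_of_nonneg
        · intro j hj
          obtain ⟨hjF, hj2⟩ := Finset.mem_filter.1 hj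
          have hkey := (hfar_key j hjF).1
          have hjlt := hFrsub j hjF
          rw [Finset.mem_Ico]
          constructor
          · have : min j (n - j) = j := by omega
            omega
          · omega
        · intro u _ _
          positivity
      have hpiece2 : ∑ j ∈ Fr.filter (fun j => ¬ 2*j ≤ n), (n:ℝ)^2/((min j (n-j) : ℕ):ℝ)^2
          ≤ ∑ u ∈ Finset.Ico J0 (n+1), (n:ℝ)^2/(u:ℝ)^2 := by
        have hcongr : ∀ j ∈ Fr.filter (fun j => ¬ 2*j ≤ n),
            (n:ℝ)^2/((min j (n-j) : ℕ):ℝ)^2 = (n:ℝ)^2/(((n-j : ℕ)):ℝ)^2 := by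
          intro j hj
          obtain ⟨hjF, hj2⟩ := Finset.mem_filter.1 hj
          congr 3
          omega
        rw [Finset.sum_congr rfl hcongr]
        have himg : ∑ j ∈ Fr.filter (fun j => ¬ 2*j ≤ n), (n:ℝ)^2/(((n-j : ℕ)):ℝ)^2
            = ∑ u ∈ (Fr.filter (fun j => ¬ 2*j ≤ n)).image (fun j => n - j),
                (n:ℝ)^2/(u:ℝ)^2 := by
          rw [Finset.sum_image]
          intro x hx y hy hxy
          have hx' := hFrsub x (Finset.mem_of_mem_filter x hx)
          have hy' := hFrsub y (Finset.mem_of_mem_filter y hy)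
          have hx2 := (Finset.mem_filter.1 hx).2
          have hy2 := (Finset.mem_filter.1 hy).2
          beta_reduce at hxy
          omega
        rw [himg]
        apply Finset.sum_le_sum_of_subset_of_nonneg
        · intro u hu
          rw [Finset.mem_image] at hu
          obtain ⟨j, hj, rfl⟩ := hu
          obtain ⟨hjF, hj2⟩ := Finset.mem_filter.1 hj
          have hkey := (hfar_key j hjF).1
          have hjlt := hFrsub j hjF
          rw [Finset.mem_Ico]
          constructor
          · have : min j (n - j) = n - j := by omega
            omega
          · omega
        · intro u _ _
          positivity
      linarith [hsplitF, hpiece1, hpiece2]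
    have h3 : ∑ u ∈ Finset.Ico J0 (n+1), (n:ℝ)^2/(u:ℝ)^2
        = (n:ℝ)^2 * ∑ u ∈ Finset.Ico J0 (n+1), (1:ℝ)/(u:ℝ)^2 := by
      rw [Finset.mul_sum]
      exact Finset.sum_congr rfl fun u _ => by ring
    have h4 := aux_sum_inv_sq J0 hJ0pos (n+1)
    have hnposR : (0:ℝ) < n := by exact_mod_cast hn
    have hJ0posR : (0:ℝ) < J0 := by exact_mod_cast hJ0pos
    have h5 : (n:ℝ)^2 * (2/(J0:ℝ)) ≤ 2*π*(n:ℝ)/d := by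
      have hd1 : d*(n:ℝ) ≤ π*(J0:ℝ) := by
        rw [div_lt_iff₀ Real.pi_pos] at hJ0gt
        linarith
      rw [show (n:ℝ)^2*(2/(J0:ℝ)) = (2*(n:ℝ)^2)/(J0:ℝ) by ring,
        div_le_div_iff₀ hJ0posR (by positivity : (0:ℝ) < d)]
      nlinarith [mul_le_mul_of_nonneg_left hd1 (by positivity : (0:ℝ) ≤ 2*(n:ℝ))]
    have hsum_nonneg : (0:ℝ) ≤ ∑ u ∈ Finset.Ico J0 (n+1), (1:ℝ)/(u:ℝ)^2 := by
      apply Finset.sum_nonneg; intro u _; positivity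
    calc ∑ j ∈ Fr, Complex.normSq (D.eval (ζ^j))
        ≤ 2 * ∑ u ∈ Finset.Ico J0 (n+1), (n:ℝ)^2/(u:ℝ)^2 := le_trans h1 h2
      _ = 2 * ((n:ℝ)^2 * ∑ u ∈ Finset.Ico J0 (n+1), (1:ℝ)/(u:ℝ)^2) := by rw [h3]
      _ ≤ 2 * ((n:ℝ)^2 * (2/(J0:ℝ))) := by
          apply mul_le_mul_of_nonneg_left _ (by norm_num : (0:ℝ) ≤ 2)
          exact mul_le_mul_of_nonneg_left h4 (by positivity)
      _ ≤ 2 * (2*π*(n:ℝ)/d) := by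
          apply mul_le_mul_of_nonneg_left h5 (by norm_num : (0:ℝ) ≤ 2)
      _ = 4*π*(n:ℝ)/d := by ring
  -- far sum with Q
  have hfar_sum : ∑ j ∈ Fr, Complex.normSq (Q.eval (ζ^j)) * Complex.normSq (D.eval (ζ^j))
      ≤ sSup FS * (4*π*(n:ℝ)/d) := by
    have h1 : ∑ j ∈ Fr, Complex.normSq (Q.eval (ζ^j)) * Complex.normSq (D.eval (ζ^j))
        ≤ ∑ j ∈ Fr, sSup FS * Complex.normSq (D.eval (ζ^j)) := by
      refine Finset.sum_le_sum fun j hj => ?_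
      have hjF := (Finset.mem_filter.1 hj).2
      push_neg at hjF
      have hmem : ‖Q.eval (ζ^j)‖^2 ∈ FS := ⟨ζ^j, by
        rw [← pow_mul, mul_comm j n, pow_mul, hζn, one_pow], hjF, rfl⟩
      have h2 : Complex.normSq (Q.eval (ζ^j)) ≤ sSup FS := by
        rw [← Complex.sq_norm]
        exact le_csSup hFSbdd hmem
      exact mul_le_mul_of_nonneg_right h2 (Complex.normSq_nonneg _)
    rw [← Finset.mul_sum] at h1
    exact le_trans h1 (mul_le_mul_of_nonneg_left hfar_est hFS0)
  -- assemble
  have hglobal : (n:ℝ) * (((q:ℝ) - (k:ℝ)/2) * Complex.normSq v)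
      ≤ sSup NS * ((n:ℝ)*q) + sSup FS * (4*π*(n:ℝ)/d) := by
    have h1 : ∑ j ∈ Finset.range n, Complex.normSq (P.eval (ζ^j))
        = ∑ j ∈ Nr, Complex.normSq (Q.eval (ζ^j)) * Complex.normSq (D.eval (ζ^j))
          + ∑ j ∈ Fr, Complex.normSq (Q.eval (ζ^j)) * Complex.normSq (D.eval (ζ^j)) := by
      rw [Finset.sum_congr rfl (fun j _ => hevalP j)]
      exact (Finset.sum_filter_add_sum_filter_not (Finset.range n) _ _).symm
    have h2 : (n:ℝ) * (((q:ℝ) - (k:ℝ)/2) * Complex.normSq v)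
        ≤ (n:ℝ) * ∑ r ∈ Finset.range n, Complex.normSq (P.coeff r) := by
      apply mul_le_mul_of_nonneg_left hwindow (by positivity)
    rw [← hpars, h1] at h2
    linarith [hnear_sum, hfar_sum]
  -- final arithmetic
  have hnposR : (0:ℝ) < (n:ℝ) := by exact_mod_cast hn
  have hc0 : (0:ℝ) < (q:ℝ) - (k:ℝ)/2 := by
    rw [hqR]
    nlinarith [hkR, hmR]
  have hstep1 : ((q:ℝ) - (k:ℝ)/2) * Complex.normSq v
      ≤ sSup NS * (q:ℝ) + sSup FS * (4*π/d) := by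
    have h3 : (n:ℝ) * (sSup NS * (q:ℝ) + sSup FS * (4*π/d))
        = sSup NS * ((n:ℝ)*q) + sSup FS * (4*π*(n:ℝ)/d) := by
      field_simp
    have h4 : (n:ℝ) * (((q:ℝ) - (k:ℝ)/2) * Complex.normSq v)
        ≤ (n:ℝ) * (sSup NS * (q:ℝ) + sSup FS * (4*π/d)) := by
      rw [h3]; exact hglobal
    exact le_of_mul_le_mul_left h4 hnposR
  have hstep2 : Complex.normSq v
      ≤ sSup NS * ((q:ℝ)/((q:ℝ) - (k:ℝ)/2)) + sSup FS * (4*π/(d*((q:ℝ) - (k:ℝ)/2))) := by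
    have e1 : sSup NS * ((q:ℝ)/((q:ℝ)-(k:ℝ)/2)) = (sSup NS * (q:ℝ))/((q:ℝ)-(k:ℝ)/2) := by
      ring
    have e2 : sSup FS * (4*π/(d*((q:ℝ)-(k:ℝ)/2))) = (sSup FS * (4*π/d))/((q:ℝ)-(k:ℝ)/2) := by
      rw [← div_div]
      ring
    rw [e1, e2, ← add_div, le_div_iff₀ hc0]
    linarith [hstep1]
  have hcoef1 : (q:ℝ)/((q:ℝ) - (k:ℝ)/2) ≤ (m:ℝ)/((m:ℝ)-1) := by
    rw [div_le_div_iff₀ hc0 (by linarith : (0:ℝ) < (m:ℝ)-1), hqR]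
    nlinarith [hkR, hmR]
  have hcoef2 : 4*π/(d*((q:ℝ) - (k:ℝ)/2)) ≤ 101/(b*((m:ℝ)-1)) := by
    have hkne : (k:ℝ) ≠ 0 := by linarith
    have hdc : d*((q:ℝ) - (k:ℝ)/2) = b*((m:ℝ) - 3/2) := by
      rw [hd_def, hqR]
      field_simp
      ring
    rw [hdc]
    rw [div_le_div_iff₀ (by nlinarith [hb, hmR] : (0:ℝ) < b*((m:ℝ)-3/2))
      (by nlinarith [hb, hmR] : (0:ℝ) < b*((m:ℝ)-1))]
    have hπ : π ≤ 3.15 := by linarith [Real.pi_lt_d2]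
    nlinarith [hb, hmR, Real.pi_pos, mul_le_mul_of_nonneg_right hπ (le_of_lt hb)]
  have hfinal : Complex.normSq v
      ≤ (m:ℝ)/((m:ℝ)-1) * sSup NS + 101/(b*((m:ℝ)-1)) * sSup FS := by
    have ha := mul_le_mul_of_nonneg_left hcoef1 hNS0
    have hbb := mul_le_mul_of_nonneg_left hcoef2 hFS0
    calc Complex.normSq v
        ≤ sSup NS * ((q:ℝ)/((q:ℝ) - (k:ℝ)/2)) + sSup FS * (4*π/(d*((q:ℝ) - (k:ℝ)/2))) := hstep2
      _ ≤ sSup NS * ((m:ℝ)/((m:ℝ)-1)) + sSup FS * (101/(b*((m:ℝ)-1))) := by linarith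
      _ = (m:ℝ)/((m:ℝ)-1) * sSup NS + 101/(b*((m:ℝ)-1)) * sSup FS := by ring
  calc ‖Q.eval z‖^2 = Complex.normSq v := by rw [hv_def]; exact Complex.sq_norm _
    _ ≤ _ := hfinal
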